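/- Let Σ = (G, σ) be a 2-connected compatible signed graph of order m. Then the n-th power signed graph Σ^n is balanced if and only if the adjacency matrix of the associated signed complete graph K^{D^±}(Σ) has spectrum {m−1 with multiplicity 1, −1 with multiplicity m−1}. -/

import Mathlib

open SimpleGraph Polynomial

variable {V : Type*}

/-- The sign of a walk: the product of the signs of its edges. -/
def walkSign {G : SimpleGraph V} (sg : V → V → ℤ) {u v : V} (p : G.Walk u v) : ℤ :=
  (p.darts.map fun d => sg d.toProd.1 d.toProd.2).prod

/-- `sigmaMax G sg u v`: the maximum sign over all shortest `u`–`v` paths. -/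
noncomputable def sigmaMax (G : SimpleGraph V) (sg : V → V → ℤ) (u v : V) : ℤ := by
  classical
  exact if ∃ p : G.Walk u v, p.length = G.dist u v ∧ walkSign sg p = 1 then 1 else -1

/-- `sigmaMin G sg u v`: the minimum sign over all shortest `u`–`v` paths. -/
noncomputable def sigmaMin (G : SimpleGraph V) (sg : V → V → ℤ) (u v : V) : ℤ := by
  classical
  exact if ∃ p : G.Walk u v, p.length = G.dist u v ∧ walkSign sg p = -1 then -1 else 1

/-- `u` and `v` are distance-compatible: all shortest `u`–`v` paths have the same sign. -/
def pairCompatible (G : SimpleGraph V) (sg : V → V → ℤ) (u v : V) : Prop :=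
  ∀ p q : G.Walk u v, p.length = G.dist u v → q.length = G.dist u v →
    walkSign sg p = walkSign sg q

/-- The `n`-th power graph: `u ~ v` iff `u ≠ v` and `d(u,v) ≤ n`. -/
def powerGraph (G : SimpleGraph V) (n : ℕ) : SimpleGraph V where
  Adj u v := u ≠ v ∧ G.dist u v ≤ n
  symm := by
    constructor
    intro u v h
    exact ⟨h.1.symm, by rw [SimpleGraph.dist_comm]; exact h.2⟩
  loopless := by
    constructor
    intro u h
    exact h.1 rfl

/-- A signed graph is balanced if every cycle has positive sign. -/
def SBalanced (G : SimpleGraph V) (sg : V → V → ℤ) : Prop :=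
  ∀ ⦃u : V⦄ (p : G.Walk u u), p.IsCycle → walkSign sg p = 1

/-- 2-connectedness: at least 3 vertices and deleting any vertex leaves a connected graph. -/
def TwoConnected [Fintype V] (G : SimpleGraph V) : Prop :=
  3 ≤ Fintype.card V ∧ ∀ v : V, ((⊤ : G.Subgraph).deleteVerts {v}).coe.Connected

/-- Signature of the associated signed complete graph `K^{D^max}(Σ)`:
edges of `G` keep their sign, non-adjacent pairs get `sigmaMax`. -/
noncomputable def kSigMax (G : SimpleGraph V) (sg : V → V → ℤ) (u v : V) : ℤ := by
  classical
  exact if G.Adj u v then sg u v else sigmaMax G sg u v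

/-- Signature of the associated signed complete graph `K^{D^min}(Σ)`. -/
noncomputable def kSigMin (G : SimpleGraph V) (sg : V → V → ℤ) (u v : V) : ℤ := by
  classical
  exact if G.Adj u v then sg u v else sigmaMin G sg u v

section Aux

open SimpleGraph Polynomial

variable {V : Type*}

lemma walkSign_nil {G : SimpleGraph V} (sg : V → V → ℤ) (u : V) :
    walkSign sg (Walk.nil : G.Walk u u) = 1 := rfl

lemma walkSign_cons {G : SimpleGraph V} (sg : V → V → ℤ) {u v w : V} (h : G.Adj u v)
    (p : G.Walk v w) : walkSign sg (Walk.cons h p) = sg u v * walkSign sg p := by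
  simp [walkSign, Walk.darts_cons]

lemma walkSign_append {G : SimpleGraph V} (sg : V → V → ℤ) {u v w : V} (p : G.Walk u v)
    (q : G.Walk v w) : walkSign sg (p.append q) = walkSign sg p * walkSign sg q := by
  simp [walkSign, Walk.darts_append]

lemma walkSign_reverse {G : SimpleGraph V} {sg : V → V → ℤ} (hsym : ∀ u v, sg u v = sg v u)
    {u v : V} (p : G.Walk u v) : walkSign sg p.reverse = walkSign sg p := by
  induction p with
  | nil => rfl
  | cons h p ih =>
      rw [Walk.reverse_cons, walkSign_append, walkSign_cons, ih, walkSign_cons, walkSign_nil,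
        mul_one, hsym, mul_comm]

lemma walkSign_isUnit {G : SimpleGraph V} {sg : V → V → ℤ}
    (hval : ∀ u v, G.Adj u v → sg u v = 1 ∨ sg u v = -1)
    {u v : V} (p : G.Walk u v) : walkSign sg p = 1 ∨ walkSign sg p = -1 := by
  induction p with
  | nil => left; rfl
  | cons h p ih =>
      rw [walkSign_cons]
      rcases hval _ _ h with h1 | h1 <;> rcases ih with h2 | h2 <;> simp [h1, h2]

lemma walkSign_potential {G : SimpleGraph V} {sg : V → V → ℤ} {f : V → ℤ}
    (hf2 : ∀ v, f v * f v = 1) (hpf : ∀ u v, G.Adj u v → sg u v = f u * f v)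
    {u v : V} (p : G.Walk u v) : walkSign sg p = f u * f v := by
  induction p with
  | nil => exact (hf2 _).symm
  | @cons u w v h p ih =>
      rw [walkSign_cons, hpf _ _ h, ih]
      calc f u * f w * (f w * f v) = f u * ((f w * f w) * f v) := by ring
        _ = f u * f v := by rw [hf2]; ring

end Aux
section Aux2

open SimpleGraph Polynomial

variable {V : Type*}

lemma eq_cons_of_mem_edges {G : SimpleGraph V} {a b c : V} (r : G.Walk a c)
    (hnt : a ∉ r.support.tail) (hme : s(a, b) ∈ r.edges) :
    ∃ (h : G.Adj a b) (r' : G.Walk b c), r = Walk.cons h r' := by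
  cases r with
  | nil => simp at hme
  | @cons _ x _ h3 r3 =>
      rw [Walk.edges_cons, List.mem_cons] at hme
      rw [Walk.support_cons, List.tail_cons] at hnt
      rcases hme with he | he
      · rw [Sym2.eq_iff] at he
        rcases he with ⟨-, rfl⟩ | ⟨h1, h2⟩
        · exact ⟨h3, r3, rfl⟩
        · exact absurd (h1 ▸ r3.start_mem_support) hnt
      · exact absurd (r3.fst_mem_support_of_mem_edges he) hnt

lemma isCycle_cons {G : SimpleGraph V} {u v : V} (h : G.Adj u v) (q : G.Walk v u)
    (hq : 2 ≤ q.length) (hnd : q.support.Nodup) : (Walk.cons h q).IsCycle := by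
  rw [Walk.cons_isCycle_iff]
  refine ⟨(Walk.isPath_def q).2 hnd, fun he => ?_⟩
  have hrp : q.reverse.IsPath := ((Walk.isPath_def q).2 hnd).reverse
  have hrev : s(u, v) ∈ q.reverse.edges := by
    rw [Walk.edges_reverse]; exact List.mem_reverse.2 he
  have hnt : u ∉ q.reverse.support.tail := by
    have h2 := hrp
    rw [Walk.isPath_def, q.reverse.support_eq_cons, List.nodup_cons] at h2
    exact h2.1
  obtain ⟨h', r', hre⟩ := eq_cons_of_mem_edges q.reverse hnt hrev
  have hr'p : r'.IsPath ∧ u ∉ r'.support := by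
    have h2 := hrp; rw [hre, Walk.cons_isPath_iff] at h2; exact h2
  cases r' with
  | nil =>
      have hlen : q.reverse.length = 1 := by rw [hre]; simp
      rw [Walk.length_reverse] at hlen; omega
  | @cons _ w _ h4 r4 =>
      have h2 := hr'p.1
      rw [Walk.cons_isPath_iff] at h2
      exact h2.2 r4.end_mem_support

lemma split_closed_walk [DecidableEq V] {H : SimpleGraph V} (s : V → V → ℤ) {x : V}
    (p : H.Walk x x) (hc : 2 ≤ p.support.tail.count x) :
    ∃ (q r : H.Walk x x), walkSign s p = walkSign s q * walkSign s r ∧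
      q.length + r.length = p.length ∧ 1 ≤ q.length ∧ 1 ≤ r.length := by
  cases p with
  | nil => simp at hc
  | @cons _ y _ h' q' =>
      rw [Walk.support_cons, List.tail_cons] at hc
      have hx' : x ∈ q'.support := List.count_pos_iff.mp (by omega)
      set t := q'.takeUntil x hx' with ht
      set d := q'.dropUntil x hx' with hd
      have hspec : t.append d = q' := q'.take_spec hx'
      have hcnt1 : t.support.count x = 1 := q'.count_support_takeUntil_eq_one hx'
      have hdc : 1 ≤ d.support.tail.count x := by
        have hsupp : q'.support = t.support ++ d.support.tail := by
          rw [← hspec, Walk.support_append]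
        rw [hsupp, List.count_append] at hc
        omega
      have hdlen : 1 ≤ d.length := by
        have h1 : x ∈ d.support.tail := List.count_pos_iff.mp (by omega)
        have h2 := Walk.length_support d
        have h3 : 1 ≤ d.support.tail.length := List.length_pos_iff.mpr (List.ne_nil_of_mem h1)
        have h4 : d.support.tail.length = d.support.length - 1 := by simp [List.length_tail]
        omega
      refine ⟨Walk.cons h' t, d, ?_, ?_, ?_, hdlen⟩
      · rw [← hspec, walkSign_cons, walkSign_append, walkSign_cons, mul_assoc]
      · have := congrArg Walk.length hspec
        rw [Walk.length_append] at this
        simp [Walk.length_cons]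
        omega
      · simp [Walk.length_cons]

lemma walkSign_closed [DecidableEq V] {H : SimpleGraph V} {s : V → V → ℤ}
    (hs2 : ∀ u v, H.Adj u v → s u v * s v u = 1) (hbal : SBalanced H s) :
    ∀ (k : ℕ) (u : V) (p : H.Walk u u), p.length ≤ k → walkSign s p = 1 := by
  intro k
  induction k with
  | zero =>
      intro u p hp
      cases p with
      | nil => rfl
      | cons h q => simp at hp
  | succ k ih =>
      intro u p hp
      by_cases hnd : p.support.tail.Nodup
      · cases p with
        | nil => rfl
        | @cons _ v _ h q =>
            rw [Walk.support_cons, List.tail_cons] at hnd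
            cases q with
            | nil => exact absurd h (H.loopless.irrefl u)
            | @cons _ w _ h2 q2 =>
                cases q2 with
                | nil =>
                    rw [walkSign_cons, walkSign_cons, walkSign_nil, mul_one]
                    exact hs2 _ _ h
                | cons h3 q3 =>
                    apply hbal
                    exact isCycle_cons h _ (by simp [Walk.length_cons]) hnd
      · obtain ⟨x, hx2⟩ : ∃ x, 2 ≤ p.support.tail.count x := by
          by_contra hcon
          push_neg at hcon
          exact hnd (List.nodup_iff_count_le_one.2 fun a => by
            have := hcon a; omega)
        have hxs : x ∈ p.support :=
          List.mem_of_mem_tail (List.count_pos_iff.mp (by omega))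
        have hsign : walkSign s (p.rotate x hxs) = walkSign s p := by
          unfold walkSign
          exact List.Perm.prod_eq (((p.rotate_darts x hxs).perm).map _)
        have hcnt : 2 ≤ (p.rotate x hxs).support.tail.count x := by
          rw [((p.support_rotate x hxs).perm).count_eq]
          exact hx2
        obtain ⟨q, r, hqr, hlen, hq1, hr1⟩ := split_closed_walk s (p.rotate x hxs) hcnt
        have hplen : (p.rotate x hxs).length = p.length := by
          rw [← Walk.length_darts, ← Walk.length_darts]
          exact ((p.rotate_darts x hxs).perm).length_eq
        rw [← hsign, hqr, ih _ q (by omega), ih _ r (by omega), mul_one]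

end Aux2
section Aux3

open SimpleGraph Polynomial

variable {V : Type*}

lemma sigmaMax_self (G : SimpleGraph V) (sg : V → V → ℤ) (u : V) :
    sigmaMax G sg u u = 1 := by
  unfold sigmaMax
  rw [if_pos]
  exact ⟨Walk.nil, by simp [SimpleGraph.dist_self], rfl⟩

lemma sigmaMax_isUnit (G : SimpleGraph V) (sg : V → V → ℤ) (u v : V) :
    sigmaMax G sg u v = 1 ∨ sigmaMax G sg u v = -1 := by
  unfold sigmaMax; split_ifs <;> simp

lemma sigmaMax_eq_walkSign {G : SimpleGraph V} {sg : V → V → ℤ}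
    (hval : ∀ u v, G.Adj u v → sg u v = 1 ∨ sg u v = -1) {u v : V}
    (hcomp : pairCompatible G sg u v) (p : G.Walk u v) (hp : p.length = G.dist u v) :
    sigmaMax G sg u v = walkSign sg p := by
  unfold sigmaMax
  split_ifs with hif
  · obtain ⟨q, hq1, hq2⟩ := hif
    rw [hcomp p q hp hq1, hq2]
  · push_neg at hif
    rcases walkSign_isUnit hval p with h1 | h1
    · exact absurd h1 (hif p hp)
    · rw [h1]

lemma sigmaMax_adj {G : SimpleGraph V} {sg : V → V → ℤ}
    (hval : ∀ u v, G.Adj u v → sg u v = 1 ∨ sg u v = -1)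
    (hcomp : ∀ u v : V, pairCompatible G sg u v) {u v : V} (h : G.Adj u v) :
    sigmaMax G sg u v = sg u v := by
  have hd : G.dist u v = 1 := SimpleGraph.dist_eq_one_iff_adj.2 h
  rw [sigmaMax_eq_walkSign hval (hcomp u v) (Walk.cons h Walk.nil) (by simp [hd]),
    walkSign_cons, walkSign_nil, mul_one]

lemma sigmaMax_symm {G : SimpleGraph V} {sg : V → V → ℤ} (hconn : G.Connected)
    (hsym : ∀ u v, sg u v = sg v u)
    (hval : ∀ u v, G.Adj u v → sg u v = 1 ∨ sg u v = -1)
    (hcomp : ∀ u v : V, pairCompatible G sg u v) (u v : V) :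
    sigmaMax G sg u v = sigmaMax G sg v u := by
  by_cases he : u = v
  · subst he; rfl
  obtain ⟨p, hp⟩ := (hconn.preconnected u v).exists_walk_length_eq_dist
  rw [sigmaMax_eq_walkSign hval (hcomp u v) p hp,
    sigmaMax_eq_walkSign hval (hcomp v u) p.reverse
      (by rw [Walk.length_reverse, hp, SimpleGraph.dist_comm]),
    walkSign_reverse hsym]

lemma kSigMax_eq_sigmaMax {G : SimpleGraph V} {sg : V → V → ℤ}
    (hval : ∀ u v, G.Adj u v → sg u v = 1 ∨ sg u v = -1)
    (hcomp : ∀ u v : V, pairCompatible G sg u v) (u v : V) :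
    kSigMax G sg u v = sigmaMax G sg u v := by
  unfold kSigMax
  split_ifs with h
  · exact (sigmaMax_adj hval hcomp h).symm
  · rfl

lemma walkSign_mapLe {G H : SimpleGraph V} (hle : G ≤ H) {s t : V → V → ℤ}
    (hag : ∀ a b, G.Adj a b → t a b = s a b) {u v : V} (p : G.Walk u v) :
    walkSign t (p.mapLe hle) = walkSign s p := by
  induction p with
  | nil => rfl
  | cons h p ih =>
      rw [Walk.mapLe, Walk.map_cons]
      rw [walkSign_cons, walkSign_cons]
      simp only [Hom.ofLE_apply]
      rw [hag _ _ h, ih]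

end Aux3
section Aux4

open Polynomial Matrix
open scoped Matrix

lemma eval_charpoly' {n R : Type*} [Fintype n] [DecidableEq n] [CommRing R]
    (M : Matrix n n R) (t : R) :
    M.charpoly.eval t = (t • (1 : Matrix n n R) - M).det := by
  rw [Matrix.charpoly, ← Polynomial.coe_evalRingHom, RingHom.map_det]
  congr 1
  ext i j
  by_cases h : i = j
  · subst h
    simp [Matrix.charmatrix_apply_eq, Matrix.one_apply]
  · simp [Matrix.charmatrix_apply_ne _ _ _ h, Matrix.one_apply, h]

lemma charpoly_signMatrix {V : Type*} [Fintype V] [DecidableEq V] (g : V → ℝ)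
    (hg : ∀ v, g v * g v = 1) (hm : 1 ≤ Fintype.card V) :
    (Matrix.of fun u v : V => if u = v then (0 : ℝ) else g u * g v).charpoly =
      (X - C ((Fintype.card V : ℝ) - 1)) * (X + C 1) ^ (Fintype.card V - 1) := by
  set m := Fintype.card V with hmdef
  set M := Matrix.of fun u v : V => if u = v then (0 : ℝ) else g u * g v with hMdef
  have hMvv : M = Matrix.vecMulVec g g - 1 := by
    ext i j
    by_cases h : i = j
    · subst h
      simp [hMdef, Matrix.vecMulVec_apply, Matrix.one_apply, hg]
    · simp [hMdef, Matrix.vecMulVec_apply, Matrix.one_apply, h]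
  apply Polynomial.eq_of_infinite_eval_eq
  apply Set.Infinite.mono (s := {(-1 : ℝ)}ᶜ)
  swap
  · exact Set.Finite.infinite_compl (Set.finite_singleton _)
  intro t ht
  have ha : t + 1 ≠ 0 := by
    intro hcon
    apply ht
    simp only [Set.mem_singleton_iff]
    linarith
  simp only [Set.mem_setOf_eq]
  rw [eval_charpoly']
  have h1 : t • (1 : Matrix V V ℝ) - M
      = (t + 1) • ((1 : Matrix V V ℝ) - (t + 1)⁻¹ • Matrix.vecMulVec g g) := by
    rw [hMvv, smul_sub, smul_smul, mul_inv_cancel₀ ha, one_smul, add_smul, one_smul]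
    abel
  rw [h1, Matrix.det_smul]
  have h2 : (1 : Matrix V V ℝ) - (t + 1)⁻¹ • Matrix.vecMulVec g g
      = 1 + Matrix.replicateCol Unit (-(t + 1)⁻¹ • g) * Matrix.replicateRow Unit g := by
    rw [← Matrix.vecMulVec_eq]
    ext i j
    simp [Matrix.vecMulVec_apply, Matrix.one_apply]
    ring
  rw [h2, Matrix.det_one_add_replicateCol_mul_replicateRow]
  have h3 : g ⬝ᵥ (-(t + 1)⁻¹ • g) = -(t + 1)⁻¹ * m := by
    simp only [dotProduct, Pi.smul_apply, smul_eq_mul]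
    rw [show ∀ f : V → ℝ, ∑ i, f i = ∑ i, f i from fun _ => rfl]
    calc ∑ i, g i * (-(t + 1)⁻¹ * g i) = ∑ i : V, -(t + 1)⁻¹ * (g i * g i) := by
          apply Finset.sum_congr rfl; intros; ring
      _ = ∑ i : V, -(t + 1)⁻¹ := by simp [hg]
      _ = -(t + 1)⁻¹ * m := by
          rw [Finset.sum_const, Finset.card_univ, nsmul_eq_mul, ← hmdef]; ring
  rw [h3]
  simp only [eval_mul, eval_pow, eval_sub, eval_add, eval_X, eval_C]
  have hpow : (t + 1) ^ m = (t + 1) ^ (m - 1) * (t + 1) := by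
    rw [← pow_succ]
    congr 1
    omega
  rw [hpow]
  field_simp
  ring
end Aux4
section Aux5

open Polynomial Matrix
open scoped Matrix

lemma potential_of_charpoly {V : Type*} [Fintype V] [DecidableEq V] (ε : V → V → ℤ)
    (hm : 2 ≤ Fintype.card V)
    (hunit : ∀ u v, ε u v = 1 ∨ ε u v = -1) (hdiag : ∀ u, ε u u = 1)
    (hsymm : ∀ u v, ε u v = ε v u)
    (hcp : (Matrix.of fun u v : V => if u = v then (0 : ℝ) else (ε u v : ℝ)).charpoly =
      (X - C ((Fintype.card V : ℝ) - 1)) * (X + C 1) ^ (Fintype.card V - 1)) :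
    ∀ u v w, ε u w * ε w v = ε u v := by
  set m := Fintype.card V with hmdef
  set A := Matrix.of fun u v : V => if u = v then (0 : ℝ) else (ε u v : ℝ) with hA
  have hherm : A.IsHermitian := by
    ext i j
    simp only [Matrix.conjTranspose_apply, hA, Matrix.of_apply, star_trivial]
    by_cases h : i = j
    · subst h; simp
    · simp only [if_neg h, if_neg (Ne.symm h)]
      rw [hsymm j i]
  have heig : ∀ i, hherm.eigenvalues i = (m : ℝ) - 1 ∨ hherm.eigenvalues i = -1 := by
    intro i
    set μ := hherm.eigenvalues i with hμ
    have hv := hherm.mulVec_eigenvectorBasis i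
    have hdet : (μ • (1 : Matrix V V ℝ) - A).det = 0 := by
      rw [← Matrix.exists_mulVec_eq_zero_iff]
      refine ⟨⇑(hherm.eigenvectorBasis i), ?_, ?_⟩
      · intro h0
        exact hherm.eigenvectorBasis.orthonormal.ne_zero i (by ext x; exact congrFun h0 x)
      · rw [Matrix.sub_mulVec, hv, Matrix.smul_mulVec, Matrix.one_mulVec, sub_self]
    have heval := eval_charpoly' A μ
    rw [hcp, hdet] at heval
    simp only [eval_mul, eval_pow, eval_sub, eval_add, eval_X, eval_C] at heval
    rcases mul_eq_zero.mp heval with h | h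
    · left; linarith [sub_eq_zero.mp h]
    · right
      have h1 : μ + 1 = 0 := pow_eq_zero_iff (by omega : m - 1 ≠ 0) |>.mp h
      linarith
  set c : ℝ := (m : ℝ) - 1 with hc
  have hfact : (A - c • 1) * (A + 1) = 0 := by
    have hst := hherm.spectral_theorem
    rw [Unitary.conjStarAlgAut_apply] at hst
    set U : Matrix V V ℝ := (hherm.eigenvectorUnitary : Matrix V V ℝ) with hU
    have hU1 : U * star U = 1 := Matrix.mem_unitaryGroup_iff.mp hherm.eigenvectorUnitary.2
    have hU2 : star U * U = 1 := Matrix.mem_unitaryGroup_iff'.mp hherm.eigenvectorUnitary.2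
    set D : Matrix V V ℝ := Matrix.diagonal (RCLike.ofReal ∘ hherm.eigenvalues) with hD
    have e1 : A - c • (1 : Matrix V V ℝ) = U * (D - c • 1) * star U := by
      rw [Matrix.mul_sub, Matrix.mul_smul, mul_one, Matrix.sub_mul, Matrix.smul_mul, hU1,
        ← hst]
    have e2 : A + (1 : Matrix V V ℝ) = U * (D + 1) * star U := by
      rw [Matrix.mul_add, mul_one, Matrix.add_mul, hU1, ← hst]
    have hdz : (D - c • 1) * (D + 1) = 0 := by
      have hD1 : D - c • (1 : Matrix V V ℝ)
          = Matrix.diagonal (fun i => hherm.eigenvalues i - c) := by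
        ext i j
        by_cases h : i = j
        · subst h; simp [hD, Matrix.diagonal_apply_eq, Matrix.one_apply]
        · simp [hD, Matrix.diagonal_apply_ne _ h, Matrix.one_apply, h]
      have hD2 : D + (1 : Matrix V V ℝ)
          = Matrix.diagonal (fun i => hherm.eigenvalues i + 1) := by
        ext i j
        by_cases h : i = j
        · subst h; simp [hD, Matrix.diagonal_apply_eq, Matrix.one_apply]
        · simp [hD, Matrix.diagonal_apply_ne _ h, Matrix.one_apply, h]
      rw [hD1, hD2, Matrix.diagonal_mul_diagonal]
      have : (fun i => (hherm.eigenvalues i - c) * (hherm.eigenvalues i + 1))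
          = fun _ => (0 : ℝ) := by
        funext i
        rcases heig i with h | h <;> rw [h] <;> ring_nf
      rw [this, Matrix.diagonal_zero]
    rw [e1, e2]
    simp only [Matrix.mul_assoc]
    rw [← Matrix.mul_assoc (star U) U, hU2, one_mul,
      ← Matrix.mul_assoc (D - c • 1) (D + 1), hdz, Matrix.zero_mul, Matrix.mul_zero]
  have hA1 : ∀ u v, (A + 1) u v = ((ε u v : ℤ) : ℝ) := by
    intro u v
    by_cases h : u = v
    · subst h; simp [hA, Matrix.one_apply, hdiag]
    · simp [hA, Matrix.one_apply, h]
  have hsq : (A + 1) * (A + 1) = (m : ℝ) • (A + 1) := by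
    have h1 : A + 1 - (m : ℝ) • (1 : Matrix V V ℝ) = A - c • 1 := by
      rw [hc, sub_smul, one_smul]
      abel
    have h2 := hfact
    rw [← h1, Matrix.sub_mul, sub_eq_zero, Matrix.smul_mul, one_mul] at h2
    exact h2
  have hNN : ∀ u v : V, ∑ w, ε u w * ε w v = (m : ℤ) * ε u v := by
    intro u v
    have h' : ((A + 1) * (A + 1)) u v = ((m : ℝ) • (A + 1)) u v := by rw [hsq]
    rw [Matrix.mul_apply, Matrix.smul_apply, smul_eq_mul] at h'
    simp only [hA1] at h'
    exact_mod_cast h'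
  intro u v w0
  have hsum := hNN u v
  have hterm : ∀ w, ε u w * ε w v = 1 ∨ ε u w * ε w v = -1 := fun w => by
    rcases hunit u w with h1 | h1 <;> rcases hunit w v with h2 | h2 <;> simp [h1, h2]
  rcases hunit u v with he | he
  · rw [he, mul_one] at hsum
    have h0 : ∑ w : V, (1 - ε u w * ε w v) = 0 := by
      rw [Finset.sum_sub_distrib, hsum]
      simp [Finset.card_univ, hmdef]
    have hz := (Finset.sum_eq_zero_iff_of_nonneg (fun w _ => by
      rcases hterm w with h | h <;> simp [h])).mp h0 w0 (Finset.mem_univ _)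
    rw [he]; omega
  · rw [he] at hsum
    have h0 : ∑ w : V, (1 + ε u w * ε w v) = 0 := by
      rw [Finset.sum_add_distrib, hsum]
      simp [Finset.card_univ, hmdef]
    have hz := (Finset.sum_eq_zero_iff_of_nonneg (fun w _ => by
      rcases hterm w with h | h <;> simp [h])).mp h0 w0 (Finset.mem_univ _)
    rw [he]; omega

end Aux5
theorem power_balanced_iff_spectrum {V : Type*} [Fintype V] (G : SimpleGraph V) (sg : V → V → ℤ)
    (hconn : G.Connected) (hsym : ∀ u v, sg u v = sg v u)
    (hval : ∀ u v, G.Adj u v → sg u v = 1 ∨ sg u v = -1) [DecidableEq V]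
    (h2 : TwoConnected G) (hcomp : ∀ u v : V, pairCompatible G sg u v)
    (n : ℕ) (hn : 1 ≤ n) :
    SBalanced (powerGraph G n) (sigmaMax G sg) ↔
      ((Matrix.of fun u v : V => if u = v then (0 : ℝ) else (kSigMax G sg u v : ℝ)).charpoly =
      (X - C ((Fintype.card V : ℝ) - 1)) * (X + C 1) ^ (Fintype.card V - 1)) := by
  have hm3 : 3 ≤ Fintype.card V := h2.1
  have hne : Nonempty V := Fintype.card_pos_iff.mp (by omega)
  have v₀ : V := Classical.arbitrary V
  constructor
  · intro hbal
    have hle : G ≤ powerGraph G n := by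
      intro a b hab
      refine ⟨hab.ne, le_trans ?_ hn⟩
      simpa using SimpleGraph.dist_le hab.toWalk
    have hP2 : ∀ a b, (powerGraph G n).Adj a b →
        sigmaMax G sg a b * sigmaMax G sg b a = 1 := by
      intro a b _
      rw [← sigmaMax_symm hconn hsym hval hcomp a b]
      rcases sigmaMax_isUnit G sg a b with h | h <;> rw [h] <;> norm_num
    choose w hw using fun v => (hconn.preconnected v₀ v).exists_walk_length_eq_dist
    have hpf : ∀ a b, G.Adj a b → sg a b = walkSign sg (w a) * walkSign sg (w b) := by
      intro a b hab
      have h1 : walkSign (sigmaMax G sg)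
          (((w a).append (Walk.cons hab (w b).reverse)).mapLe hle) = 1 :=
        walkSign_closed hP2 hbal _ v₀ _ le_rfl
      rw [walkSign_mapLe hle (fun x y hxy => sigmaMax_adj hval hcomp hxy),
        walkSign_append, walkSign_cons, walkSign_reverse hsym] at h1
      rcases walkSign_isUnit hval (w a) with h3 | h3 <;>
        rcases walkSign_isUnit hval (w b) with h4 | h4 <;>
        rw [h3, h4] at h1 ⊢ <;> linarith
    have hf2 : ∀ v, walkSign sg (w v) * walkSign sg (w v) = 1 := by
      intro v
      rcases walkSign_isUnit hval (w v) with h | h <;> rw [h] <;> norm_num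
    have hglob : ∀ a b : V, a ≠ b →
        kSigMax G sg a b = walkSign sg (w a) * walkSign sg (w b) := by
      intro a b hab
      obtain ⟨p, hp⟩ := (hconn.preconnected a b).exists_walk_length_eq_dist
      rw [kSigMax_eq_sigmaMax hval hcomp, sigmaMax_eq_walkSign hval (hcomp a b) p hp,
        walkSign_potential hf2 hpf p]
    have hM : (Matrix.of fun u v : V => if u = v then (0 : ℝ) else (kSigMax G sg u v : ℝ))
        = Matrix.of fun u v : V => if u = v then (0 : ℝ)
            else ((walkSign sg (w u) : ℝ) * (walkSign sg (w v) : ℝ)) := by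
      ext a b
      by_cases h : a = b
      · simp [h]
      · simp only [Matrix.of_apply, if_neg h]
        rw [hglob a b h]
        push_cast
        ring
    rw [hM]
    exact charpoly_signMatrix _ (fun v => by exact_mod_cast hf2 v) (by omega)
  · intro hcp
    have hkunit : ∀ u v, kSigMax G sg u v = 1 ∨ kSigMax G sg u v = -1 := by
      intro u v
      unfold kSigMax
      split_ifs with h
      · exact hval u v h
      · exact sigmaMax_isUnit G sg u v
    have hksymm : ∀ u v, kSigMax G sg u v = kSigMax G sg v u := by
      intro u v
      rw [kSigMax_eq_sigmaMax hval hcomp, kSigMax_eq_sigmaMax hval hcomp,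
        sigmaMax_symm hconn hsym hval hcomp]
    set ε : V → V → ℤ := fun u v => if u = v then 1 else kSigMax G sg u v with hε
    have hεunit : ∀ u v, ε u v = 1 ∨ ε u v = -1 := by
      intro u v
      by_cases h : u = v
      · left; simp [hε, h]
      · simpa [hε, h] using hkunit u v
    have hεdiag : ∀ u, ε u u = 1 := fun u => by simp [hε]
    have hεsymm : ∀ u v, ε u v = ε v u := by
      intro u v
      by_cases h : u = v
      · subst h; rfl
      · simp only [hε, if_neg h, if_neg (Ne.symm h)]
        exact hksymm u v
    have hMe : (Matrix.of fun u v : V => if u = v then (0 : ℝ) else (ε u v : ℝ))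
        = Matrix.of fun u v : V => if u = v then (0 : ℝ) else (kSigMax G sg u v : ℝ) := by
      ext a b
      by_cases h : a = b <;> simp [hε, h]
    have hmult := potential_of_charpoly ε (by omega) hεunit hεdiag hεsymm
      (by rw [hMe]; exact hcp)
    have hf2 : ∀ v, ε v₀ v * ε v₀ v = 1 := by
      intro v
      rcases hεunit v₀ v with h | h <;> rw [h] <;> norm_num
    have hpotP : ∀ a b, (powerGraph G n).Adj a b →
        sigmaMax G sg a b = ε v₀ a * ε v₀ b := by
      intro a b hab
      have h1 : sigmaMax G sg a b = ε a b := by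
        rw [hε]
        simp only [if_neg hab.1]
        exact (kSigMax_eq_sigmaMax hval hcomp a b).symm
      rw [h1, ← hmult a b v₀, hεsymm a v₀]
    intro u p hcyc
    rw [walkSign_potential hf2 hpotP p]
    exact hf2 u
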